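/- (Proposition 1(iii), dissipative zone, non-effective dissipation.) Assume (A1): σ₀ admits an absolutely convergent Fourier expansion with A₁ < ∞; (A3) for η; and 0 < m < 1. Fix N ≥ 1. Then there exists a constant K_D > 0 such that for every ξ ∈ ℝ^d, every t ≥ 0 with (1+t)|ξ| ≤ N, and every real-valued C² solution v(·,ξ) of ∂ₜ²v + |ξ|²v + b(t)∂ₜv = 0 with v(0,ξ) = v₀(ξ), ∂ₜv(0,ξ) = v₁(ξ), one has ℰ(t,ξ) ≤ K_D (|ξ|²|v₀(ξ)|² + (1+t)^{−2m}|v₁(ξ)|²). -/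

import Mathlib

open Set intervalIntegral

lemma periodic_primitive_bounded {T m : ℝ} (hT : 0 < T) {σ₀ : ℝ → ℝ}
    (hcont : Continuous σ₀) (hper : Function.Periodic σ₀ (2*T))
    (hmean : m = 1 / (2*T) * ∫ s in (-T)..T, σ₀ s) :
    ∃ M : ℝ, 0 < M ∧ ∀ u : ℝ, |∫ x in (0:ℝ)..u, (σ₀ x - m)| ≤ M := by
  set f : ℝ → ℝ := fun x => σ₀ x - m with hf
  have hfc : Continuous f := hcont.sub continuous_const
  have hfper : Function.Periodic f (2*T) := fun x => by simp [hf, hper x]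
  set G : ℝ → ℝ := fun u => ∫ x in (0:ℝ)..u, f x with hG
  have hGc : Continuous G :=
    Differentiable.continuous fun b => ((hfc.integral_hasStrictDerivAt 0 b).hasDerivAt).differentiableAt
  have hGper : Function.Periodic G (2*T) := by
    intro u
    have h1 : G (u + 2*T) - G u = ∫ x in u..(u + 2*T), f x := by
      rw [hG]
      simp only
      rw [← intervalIntegral.integral_add_adjacent_intervals (a := 0) (b := u) (c := u + 2*T)
        (hfc.intervalIntegrable _ _) (hfc.intervalIntegrable _ _)]
      ring
    have h2 : (∫ x in u..(u + 2*T), f x) = ∫ x in (-T)..(-T + 2*T), f x :=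
      hfper.intervalIntegral_add_eq u (-T)
    have h3 : (∫ x in (-T)..(-T + 2*T), f x) = 0 := by
      have : (-T) + 2*T = T := by ring
      rw [this]
      rw [hf]
      rw [intervalIntegral.integral_sub (hcont.intervalIntegrable _ _)
        (intervalIntegrable_const)]
      rw [intervalIntegral.integral_const]
      have h2T : (2*T) ≠ 0 := by positivity
      field_simp [hmean]
      have hI : (∫ s in (-T)..T, σ₀ s) = 2*T*m := by
        rw [hmean, ← mul_assoc, mul_one_div_cancel h2T, one_mul]
      rw [smul_eq_mul, hI]; ring
    have := h1.trans (h2.trans h3)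
    linarith [sub_eq_zero.mp this]
  obtain ⟨C, hC⟩ := (isCompact_Icc (a := (0:ℝ)) (b := 2*T)).exists_bound_of_continuousOn
    hGc.continuousOn
  refine ⟨C + 1, ?_, ?_⟩
  · have := hC 0 ⟨le_refl 0, by positivity⟩
    have h0 : (0:ℝ) ≤ ‖G 0‖ := norm_nonneg _
    linarith
  · intro u
    obtain ⟨y, hy, hyv⟩ := hGper.exists_mem_Ico₀ (by positivity) u
    have hCy := hC y ⟨hy.1, hy.2.le⟩
    have : |G u| = |G y| := by rw [hyv]
    rw [show |∫ x in (0:ℝ)..u, (σ₀ x - m)| = |G u| from rfl, this]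
    calc |G y| = ‖G y‖ := (Real.norm_eq_abs _).symm
    _ ≤ C := hCy
    _ ≤ C + 1 := by linarith

lemma B_log_bound {m : ℝ} {σ₀ : ℝ → ℝ} (hcont : Continuous σ₀)
    {M : ℝ} (hM : ∀ u, |∫ x in (0:ℝ)..u, (σ₀ x - m)| ≤ M)
    {η η' η'' : ℝ → ℝ}
    (hηd : ∀ t, 0 ≤ t → HasDerivAt η (η' t) t)
    (hηd' : ∀ t, 0 ≤ t → HasDerivAt η' (η'' t) t)
    (hη''cont : ContinuousOn η'' (Set.Ici 0))
    (hη'pos : ∀ t, 0 ≤ t → 0 < η' t)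
    (hη''pos : ∀ t, 0 ≤ t → 0 < η'' t)
    {t : ℝ} (ht : 0 ≤ t) :
    |(∫ s in (0:ℝ)..t, σ₀ (η (max s 0)) / (1 + max s 0)) - m * Real.log (1+t)|
      ≤ 2 * M / η' 0 := by
  have hM0 : 0 ≤ M := le_trans (abs_nonneg _) (hM 0)
  have huIcc : uIcc (0:ℝ) t = Icc 0 t := uIcc_of_le ht
  -- continuity of η, η' on Ici 0
  have hηc : ContinuousOn η (Ici 0) := fun s hs => ((hηd s hs).continuousAt).continuousWithinAt
  have hη'c : ContinuousOn η' (Ici 0) := fun s hs => ((hηd' s hs).continuousAt).continuousWithinAt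
  have hIccIci : Icc (0:ℝ) t ⊆ Ici 0 := fun x hx => hx.1
  have h1s : ∀ s ∈ Icc (0:ℝ) t, (1:ℝ) + s ≠ 0 := fun s hs => by nlinarith [hs.1]
  have hII : ∀ {f : ℝ → ℝ}, ContinuousOn f (Icc 0 t) → IntervalIntegrable f MeasureTheory.volume 0 t := by
    intro f h
    apply ContinuousOn.intervalIntegrable
    rwa [huIcc]
  have hη'ne : ∀ s ∈ Icc (0:ℝ) t, η' s ≠ 0 := fun s hs => ne_of_gt (hη'pos s hs.1)
  -- step 1 : remove max
  have hcongr : (∫ s in (0:ℝ)..t, σ₀ (η (max s 0)) / (1 + max s 0))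
      = ∫ s in (0:ℝ)..t, σ₀ (η s) / (1 + s) := by
    apply intervalIntegral.integral_congr
    intro s hs
    rw [huIcc] at hs
    have hmax : s ⊔ 0 = s := max_eq_left hs.1
    simp only [hmax]
  rw [hcongr]
  -- G and its properties
  set G : ℝ → ℝ := fun u => ∫ x in (0:ℝ)..u, (σ₀ x - m) with hGdef
  have hGd : ∀ u : ℝ, HasDerivAt G (σ₀ u - m) u := fun u =>
    ((hcont.sub continuous_const).integral_hasStrictDerivAt 0 u).hasDerivAt
  have hGc : Continuous G := Differentiable.continuous fun u => (hGd u).differentiableAt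
  -- g and p
  set g : ℝ → ℝ := fun s => ((1+s) * η' s)⁻¹ with hgdef
  set p : ℝ → ℝ := fun s => η' s + (1+s) * η'' s with hpdef
  have hppos : ∀ s ∈ Icc (0:ℝ) t, 0 < p s := by
    intro s hs
    have h1 := hη'pos s hs.1
    have h2 := hη''pos s hs.1
    have : (0:ℝ) < 1 + s := by nlinarith [hs.1]
    simp only [hpdef]
    positivity
  have hqpos : ∀ s ∈ Icc (0:ℝ) t, 0 < (1+s) * η' s := by
    intro s hs
    have h1 := hη'pos s hs.1
    have : (0:ℝ) < 1 + s := by nlinarith [hs.1]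
    positivity
  have hgd : ∀ s ∈ Icc (0:ℝ) t, HasDerivAt g (-(p s) / ((1+s) * η' s)^2) s := by
    intro s hs
    have hq : HasDerivAt (fun u => (1+u) * η' u) (p s) s := by
      have h1 : HasDerivAt (fun u : ℝ => 1 + u) 1 s := (hasDerivAt_id s).const_add 1
      have := h1.mul (hηd' s hs.1)
      refine this.congr_deriv ?_
      simp only [hpdef]; ring_nf
    exact hq.inv (ne_of_gt (hqpos s hs))
  have hgpos : ∀ s ∈ Icc (0:ℝ) t, 0 < g s := fun s hs => by
    simp only [hgdef]; exact inv_pos.mpr (hqpos s hs)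
  -- continuity of various integrands on [0,t]
  have hcont1 : ContinuousOn (fun s => σ₀ (η s) / (1 + s)) (Icc 0 t) := by
    apply ContinuousOn.div
    · exact hcont.comp_continuousOn (hηc.mono hIccIci)
    · exact (continuous_const.add continuous_id).continuousOn
    · exact h1s
  have hcont2 : ContinuousOn (fun s : ℝ => m * (1+s)⁻¹) (Icc 0 t) := by
    apply ContinuousOn.mul continuousOn_const
    exact ContinuousOn.inv₀ (continuous_const.add continuous_id).continuousOn h1s
  have hcontq : ContinuousOn (fun s => (1+s) * η' s) (Icc 0 t) :=
    ((continuous_const.add continuous_id).continuousOn).mul (hη'c.mono hIccIci)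
  have hcontp : ContinuousOn p (Icc 0 t) := by
    apply ContinuousOn.add (hη'c.mono hIccIci)
    exact ((continuous_const.add continuous_id).continuousOn).mul (hη''cont.mono hIccIci)
  have hcontg : ContinuousOn g (Icc 0 t) :=
    ContinuousOn.inv₀ hcontq (fun s hs => ne_of_gt (hqpos s hs))
  have hcontR : ContinuousOn (fun s => G (η s) * (-(p s) / ((1+s) * η' s)^2)) (Icc 0 t) := by
    apply ContinuousOn.mul (hGc.comp_continuousOn (hηc.mono hIccIci))
    apply ContinuousOn.div hcontp.neg (hcontq.pow 2)
    exact fun s hs => pow_ne_zero 2 (ne_of_gt (hqpos s hs))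
  have hcontfirst : ContinuousOn (fun s => (σ₀ (η s) - m) * (1+s)⁻¹) (Icc 0 t) := by
    apply ContinuousOn.mul
    · exact (hcont.comp_continuousOn (hηc.mono hIccIci)).sub continuousOn_const
    · exact ContinuousOn.inv₀ (continuous_const.add continuous_id).continuousOn h1s
  -- step: log integral
  have hlog : (∫ s in (0:ℝ)..t, m * (1+s)⁻¹) = m * Real.log (1+t) := by
    have key : ∀ s ∈ uIcc (0:ℝ) t, HasDerivAt (fun u => m * Real.log (1+u)) (m * (1+s)⁻¹) s := by
      intro s hs
      rw [huIcc] at hs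
      have h1 : HasDerivAt (fun u : ℝ => 1 + u) 1 s := (hasDerivAt_id s).const_add 1
      have h2 : HasDerivAt (fun u : ℝ => Real.log (1+u)) ((1+s)⁻¹ * 1) s :=
        (Real.hasDerivAt_log (h1s s hs)).comp s h1
      simpa using h2.const_mul m
    rw [intervalIntegral.integral_eq_sub_of_hasDerivAt key
      (hII hcont2)]
    simp
  -- step: difference as single integral
  have hsplit : (∫ s in (0:ℝ)..t, σ₀ (η s) / (1 + s)) - m * Real.log (1+t)
      = ∫ s in (0:ℝ)..t, (σ₀ (η s) - m) * (1+s)⁻¹ := by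
    rw [← hlog, ← intervalIntegral.integral_sub
      (hII hcont1)
      (hII hcont2)]
    apply intervalIntegral.integral_congr
    intro s hs
    rw [huIcc] at hs
    have := h1s s hs
    field_simp
  rw [hsplit]
  -- integration by parts
  have hDd : ∀ s ∈ uIcc (0:ℝ) t, HasDerivAt (fun u => G (η u) * g u)
      ((σ₀ (η s) - m) * (1+s)⁻¹ + G (η s) * (-(p s) / ((1+s) * η' s)^2)) s := by
    intro s hs
    rw [huIcc] at hs
    have hGη : HasDerivAt (fun u => G (η u)) ((σ₀ (η s) - m) * η' s) s :=
      (hGd (η s)).comp s (hηd s hs.1)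
    have := hGη.mul (hgd s hs)
    refine this.congr_deriv ?_
    have h1 := h1s s hs
    have h2 := hη'ne s hs
    simp only [hgdef]
    field_simp
  have hFTC : (∫ s in (0:ℝ)..t, ((σ₀ (η s) - m) * (1+s)⁻¹ + G (η s) * (-(p s) / ((1+s) * η' s)^2)))
      = G (η t) * g t - G (η 0) * g 0 := by
    apply intervalIntegral.integral_eq_sub_of_hasDerivAt hDd
    exact hII (hcontfirst.add hcontR)
  have hadd : (∫ s in (0:ℝ)..t, ((σ₀ (η s) - m) * (1+s)⁻¹ + G (η s) * (-(p s) / ((1+s) * η' s)^2)))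
      = (∫ s in (0:ℝ)..t, (σ₀ (η s) - m) * (1+s)⁻¹)
        + ∫ s in (0:ℝ)..t, G (η s) * (-(p s) / ((1+s) * η' s)^2) :=
    intervalIntegral.integral_add
      (hII hcontfirst)
      (hII hcontR)
  -- bound the remainder integral
  have hgineq : (∫ s in (0:ℝ)..t, M * (p s / ((1+s) * η' s)^2)) = M * (g 0 - g t) := by
    have key : ∀ s ∈ uIcc (0:ℝ) t, HasDerivAt (fun u => -(M * g u)) (M * (p s / ((1+s) * η' s)^2)) s := by
      intro s hs
      rw [huIcc] at hs
      have := ((hgd s hs).const_mul M).neg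
      refine this.congr_deriv ?_
      field_simp
    rw [intervalIntegral.integral_eq_sub_of_hasDerivAt key]
    · ring
    · apply ContinuousOn.intervalIntegrable
      rw [huIcc]
      apply ContinuousOn.mul continuousOn_const
      apply ContinuousOn.div hcontp (hcontq.pow 2)
      exact fun s hs => pow_ne_zero 2 (ne_of_gt (hqpos s hs))
  have hRbound : |∫ s in (0:ℝ)..t, G (η s) * (-(p s) / ((1+s) * η' s)^2)| ≤ M * (g 0 - g t) := by
    rw [← hgineq]
    calc |∫ s in (0:ℝ)..t, G (η s) * (-(p s) / ((1+s) * η' s)^2)|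
        ≤ ∫ s in (0:ℝ)..t, |G (η s) * (-(p s) / ((1+s) * η' s)^2)| :=
          intervalIntegral.abs_integral_le_integral_abs ht
      _ ≤ ∫ s in (0:ℝ)..t, M * (p s / ((1+s) * η' s)^2) := by
          apply intervalIntegral.integral_mono_on ht
          · exact hII hcontR.abs
          · apply ContinuousOn.intervalIntegrable
            rw [huIcc]
            apply ContinuousOn.mul continuousOn_const
            apply ContinuousOn.div hcontp (hcontq.pow 2)
            exact fun s hs => pow_ne_zero 2 (ne_of_gt (hqpos s hs))
          · intro s hs
            rw [abs_mul]
            have h1 : |(-(p s) / ((1+s) * η' s)^2)| = p s / ((1+s) * η' s)^2 := by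
              rw [abs_div, abs_neg, abs_of_pos (hppos s hs), abs_of_pos (pow_pos (hqpos s hs) 2)]
            rw [h1]
            apply mul_le_mul_of_nonneg_right (hM (η s))
            exact le_of_lt (div_pos (hppos s hs) (pow_pos (hqpos s hs) 2))
  -- g values
  have hg0 : g 0 = (η' 0)⁻¹ := by simp [hgdef]
  have hgt_pos : 0 < g t := hgpos t ⟨ht, le_refl t⟩
  have hg0_pos : 0 < g 0 := hgpos 0 ⟨le_refl 0, ht⟩
  -- |D t| and |D 0|
  have hDt : |G (η t) * g t| ≤ M * g t := by
    rw [abs_mul, abs_of_pos hgt_pos]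
    exact mul_le_mul_of_nonneg_right (hM (η t)) hgt_pos.le
  have hD0 : |G (η 0) * g 0| ≤ M * g 0 := by
    rw [abs_mul, abs_of_pos hg0_pos]
    exact mul_le_mul_of_nonneg_right (hM (η 0)) hg0_pos.le
  -- combine
  have hmain : (∫ s in (0:ℝ)..t, (σ₀ (η s) - m) * (1+s)⁻¹)
      = G (η t) * g t - G (η 0) * g 0 - ∫ s in (0:ℝ)..t, G (η s) * (-(p s) / ((1+s) * η' s)^2) := by
    rw [← hFTC, hadd]; ring
  rw [hmain]
  have h2Mg : 2 * M / η' 0 = 2 * M * g 0 := by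
    rw [hg0]; field_simp
  rw [h2Mg]
  calc |G (η t) * g t - G (η 0) * g 0 - ∫ s in (0:ℝ)..t, G (η s) * (-(p s) / ((1+s) * η' s)^2)|
      ≤ |G (η t) * g t| + |G (η 0) * g 0|
        + |∫ s in (0:ℝ)..t, G (η s) * (-(p s) / ((1+s) * η' s)^2)| := by
        calc _ ≤ |G (η t) * g t - G (η 0) * g 0| + |∫ s in (0:ℝ)..t, G (η s) * (-(p s) / ((1+s) * η' s)^2)| := abs_sub _ _
        _ ≤ _ := by linarith [abs_sub (G (η t) * g t) (G (η 0) * g 0)]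
    _ ≤ M * g t + M * g 0 + M * (g 0 - g t) := by linarith
    _ = 2 * M * g 0 := by ring

lemma integral_one_add_rpow {p s : ℝ} (hs : 0 ≤ s) (hp : 0 ≤ p) :
    (∫ u in (0:ℝ)..s, (1+u) ^ p) = ((1+s) ^ (p+1) - 1) / (p+1) := by
  have hp1 : p + 1 ≠ 0 := by positivity
  have key : ∀ u ∈ uIcc (0:ℝ) s, HasDerivAt (fun x : ℝ => (1+x) ^ (p+1) / (p+1)) ((1+u) ^ p) u := by
    intro u hu
    rw [uIcc_of_le hs] at hu
    have h1u : (0:ℝ) < 1 + u := by nlinarith [hu.1]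
    have hbase : HasDerivAt (fun x : ℝ => 1 + x) 1 u := (hasDerivAt_id u).const_add 1
    have hpow := (Real.hasDerivAt_rpow_const (x := 1+u) (p := p+1) (Or.inl (ne_of_gt h1u))).comp u hbase
    have := hpow.div_const (p+1)
    refine this.congr_deriv ?_
    have he : p + 1 - 1 = p := by ring
    rw [he]
    field_simp
  rw [intervalIntegral.integral_eq_sub_of_hasDerivAt key]
  · rw [show (1:ℝ)+0 = 1 by ring, Real.one_rpow]
    ring
  · apply ContinuousOn.intervalIntegrable
    apply ContinuousOn.rpow_const
    · exact (continuous_const.add continuous_id).continuousOn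
    · intro x hx
      exact Or.inr hp

lemma gronwall_concrete {W Wd : ℝ → ℝ} {κ a b t₀ μ : ℝ}
    (hκ : 0 ≤ κ) (ht₀ : 0 ≤ t₀) (hμ0 : 0 < μ) (hμ1 : μ < 1)
    (ha : 0 ≤ a) (hb : 0 ≤ b)
    (hWd : ∀ s, HasDerivAt W (Wd s) s)
    (hWd0 : ∀ s, 0 ≤ Wd s)
    (hW0 : W 0 = 0)
    (hle : ∀ s ∈ Set.Icc 0 t₀, Wd s ≤ a * (1+s) ^ (-μ) + b + κ * W s) :
    W t₀ ≤ Real.exp (κ * t₀) * (a * (1-μ)⁻¹ * (1+t₀) ^ (1-μ) + b * t₀) := by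
  have hμm : (0:ℝ) < 1 - μ := by linarith
  set F : ℝ → ℝ := fun u => a * (1-μ)⁻¹ * (1+u) ^ (1-μ) + b * u with hF
  have hFd : ∀ s : ℝ, 0 ≤ s → HasDerivAt F (a * (1+s) ^ (-μ) + b) s := by
    intro s hs
    have h1s : (0:ℝ) < 1 + s := by linarith
    have hbase : HasDerivAt (fun x : ℝ => 1 + x) 1 s := (hasDerivAt_id s).const_add 1
    have hpow := (Real.hasDerivAt_rpow_const (x := 1+s) (p := 1-μ) (Or.inl (ne_of_gt h1s))).comp s hbase
    have h2 := (hpow.const_mul (a * (1-μ)⁻¹)).add ((hasDerivAt_id s).const_mul b)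
    rw [hF]
    refine h2.congr_deriv ?_
    have he : 1 - μ - 1 = -μ := by ring
    rw [he]
    field_simp
  set g₂ : ℝ → ℝ := fun s => Real.exp (-(κ * s)) * W s - F s with hg₂
  have hg₂d : ∀ s : ℝ, 0 ≤ s → HasDerivAt g₂
      (Real.exp (-(κ * s)) * (-κ) * W s + Real.exp (-(κ * s)) * Wd s - (a * (1+s) ^ (-μ) + b)) s := by
    intro s hs
    have hexp : HasDerivAt (fun u : ℝ => Real.exp (-(κ * u))) (Real.exp (-(κ * s)) * (-κ)) s := by
      have h1 : HasDerivAt (fun u : ℝ => -(κ * u)) (-κ) s := by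
        exact (((hasDerivAt_id s).const_mul κ).neg).congr_deriv (by ring)
      simpa using h1.exp
    have := (hexp.mul (hWd s)).sub (hFd s hs)
    rw [hg₂]
    exact this.congr_deriv (by ring)
  have hWmono : Monotone W :=
    monotone_of_deriv_nonneg (fun s => (hWd s).differentiableAt)
      (fun s => by rw [(hWd s).deriv]; exact hWd0 s)
  have hWnonneg : ∀ s, 0 ≤ s → 0 ≤ W s := fun s hs => hW0 ▸ hWmono hs
  have hanti : AntitoneOn g₂ (Icc 0 t₀) := by
    apply antitoneOn_of_deriv_nonpos (convex_Icc 0 t₀)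
    · exact fun s hs => ((hg₂d s hs.1).continuousAt).continuousWithinAt
    · rw [interior_Icc]
      exact fun s hs => ((hg₂d s hs.1.le).differentiableAt).differentiableWithinAt
    · rw [interior_Icc]
      intro s hs
      rw [(hg₂d s hs.1.le).deriv]
      have hE1 : Real.exp (-(κ * s)) ≤ 1 := by
        rw [Real.exp_le_one_iff]
        nlinarith [hs.1]
      have hEpos : (0:ℝ) < Real.exp (-(κ * s)) := Real.exp_pos _
      have hf0 : 0 ≤ a * (1+s) ^ (-μ) + b :=
        add_nonneg (mul_nonneg ha (Real.rpow_nonneg (by linarith [hs.1]) _)) hb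
      have hles := hle s ⟨hs.1.le, hs.2.le⟩
      have h1 : Wd s - κ * W s ≤ a * (1+s) ^ (-μ) + b := by linarith
      nlinarith [mul_le_mul_of_nonneg_left h1 hEpos.le,
        mul_le_mul_of_nonneg_right hE1 hf0]
  have hg₂le : g₂ t₀ ≤ g₂ 0 := hanti (left_mem_Icc.mpr ht₀) (right_mem_Icc.mpr ht₀) ht₀
  have hg₂0 : g₂ 0 = -(a * (1-μ)⁻¹) := by
    rw [hg₂, hF]
    simp [hW0, Real.one_rpow]
  have hFnonneg : 0 ≤ a * (1-μ)⁻¹ := mul_nonneg ha (inv_nonneg.mpr hμm.le)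
  have e1 : Real.exp (-(κ * t₀)) * W t₀ ≤ a * (1-μ)⁻¹ * (1+t₀) ^ (1-μ) + b * t₀ := by
    have : g₂ t₀ = Real.exp (-(κ * t₀)) * W t₀ - F t₀ := by rw [hg₂]
    rw [this, hg₂0, hF] at hg₂le
    simp only at hg₂le
    linarith
  have e2 : Real.exp (κ * t₀) * (Real.exp (-(κ * t₀)) * W t₀) = W t₀ := by
    rw [← mul_assoc, ← Real.exp_add]
    simp
  calc W t₀ = Real.exp (κ * t₀) * (Real.exp (-(κ * t₀)) * W t₀) := e2.symm
    _ ≤ Real.exp (κ * t₀) * (a * (1-μ)⁻¹ * (1+t₀) ^ (1-μ) + b * t₀) :=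
        mul_le_mul_of_nonneg_left e1 (Real.exp_pos _).le

lemma assemble_sq {X Y a b A0 A1 B0 B1 : ℝ} (hX : 0 ≤ X) (hY : 0 ≤ Y)
    (hA0 : 0 ≤ A0) (hA1 : 0 ≤ A1) (hB0 : 0 ≤ B0) (hB1 : 0 ≤ B1)
    (ha : 0 ≤ a) (hb : 0 ≤ b)
    (h1 : a ≤ A0*X + A1*Y) (h2 : b ≤ B0*X + B1*Y) :
    a^2 + b^2 ≤ 2*((A0+B0)^2 + (A1+B1)^2) * (X^2 + Y^2) := by
  have h1sq : a^2 ≤ (A0*X+A1*Y)^2 := pow_le_pow_left₀ ha h1 2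
  have h2sq : b^2 ≤ (B0*X+B1*Y)^2 := pow_le_pow_left₀ hb h2 2
  nlinarith [sq_nonneg ((A1+B1)*X - (A0+B0)*Y), mul_nonneg (mul_nonneg hA0 hB0) (sq_nonneg X),
    mul_nonneg (mul_nonneg hA1 hB1) (sq_nonneg Y),
    mul_nonneg (mul_nonneg hA0 hB1) (mul_nonneg hX hY),
    mul_nonneg (mul_nonneg hA1 hB0) (mul_nonneg hX hY),
    mul_nonneg (mul_nonneg hA0 hA1) (mul_nonneg hX hY),
    mul_nonneg (mul_nonneg hB0 hB1) (mul_nonneg hX hY),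
    mul_nonneg (mul_nonneg hA0 hB0) (sq_nonneg Y),
    mul_nonneg (mul_nonneg hA1 hB1) (sq_nonneg X)]

open Set Filter

set_option maxHeartbeats 1000000 in
/-- Proposition 1(iii), dissipative zone, non-effective dissipation. -/
theorem energy_estimate_dissipative_zone_noneffective
    (d : ℕ) (T m A₁ : ℝ) (hT : 0 < T) (hm0 : 0 < m) (hm1 : m < 1)
    (α β : ℕ → ℝ) (σ₀ : ℝ → ℝ)
    (hσ₀cont : Continuous σ₀)
    (hσ₀per : Function.Periodic σ₀ (2 * T))
    (hsum : Summable fun n : ℕ => |α (n + 1)| + |β (n + 1)|)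
    (hA₁ : A₁ = ∑' n : ℕ, (|α (n + 1)| + |β (n + 1)|))
    (hmean : m = 1 / (2 * T) * ∫ s in (-T)..T, σ₀ s)
    (hFourier : ∀ x : ℝ, σ₀ x = m + ∑' n : ℕ,
      (α (n + 1) * Real.cos (((n : ℝ) + 1) * Real.pi * x / T)
        + β (n + 1) * Real.sin (((n : ℝ) + 1) * Real.pi * x / T)))
    (η η' η'' : ℝ → ℝ)
    (hη0 : 0 ≤ η 0)
    (hηd : ∀ t, 0 ≤ t → HasDerivAt η (η' t) t)
    (hηd' : ∀ t, 0 ≤ t → HasDerivAt η' (η'' t) t)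
    (hη''cont : ContinuousOn η'' (Ici 0))
    (hη'pos : ∀ t, 0 ≤ t → 0 < η' t)
    (hη''pos : ∀ t, 0 ≤ t → 0 < η'' t)
    (N : ℝ) (hN : 1 ≤ N) :
    ∃ K_D : ℝ, 0 < K_D ∧
      ∀ ξ : EuclideanSpace ℝ (Fin d),
      ∀ v v' v'' : ℝ → ℝ,
        (∀ t, 0 ≤ t → HasDerivAt v (v' t) t) →
        (∀ t, 0 ≤ t → HasDerivAt v' (v'' t) t) →
        (∀ t, 0 ≤ t → v'' t + ‖ξ‖ ^ 2 * v t + σ₀ (η t) / (1 + t) * v' t = 0) →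
        ∀ t, 0 ≤ t → (1 + t) * ‖ξ‖ ≤ N →
          ‖ξ‖ ^ 2 * v t ^ 2 + v' t ^ 2
            ≤ K_D * (‖ξ‖ ^ 2 * v 0 ^ 2 + (1 + t) ^ (-(2 * m)) * v' 0 ^ 2) := by
  clear hsum hA₁ hFourier hη0
  obtain ⟨M, hMpos, hM⟩ := periodic_primitive_bounded hT hσ₀cont hσ₀per hmean
  have hη'0 := hη'pos 0 le_rfl
  have hC₀pos : 0 < 2 * M / η' 0 := by positivity
  set c : ℝ := Real.exp (2 * M / η' 0) with hcdef
  have hc1 : 1 ≤ c := Real.one_le_exp hC₀pos.le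
  have hcpos : 0 < c := lt_of_lt_of_le one_pos hc1
  have hNpos : 0 < N := lt_of_lt_of_le one_pos hN
  set P : ℝ := Real.exp (c ^ 2 * N ^ 2) with hPdef
  have hPpos : 0 < P := Real.exp_pos _
  have h1m : 0 < 1 - m := by linarith
  have hinv : 0 < (1 - m)⁻¹ := inv_pos.mpr h1m
  have hE0pos : 0 < 1 + P * c ^ 2 * N ^ 2 := by
    nlinarith [mul_pos (mul_pos hPpos (pow_pos hcpos 2)) (pow_pos hNpos 2)]
  have hE1pos : 0 < P * c * N * (1 - m)⁻¹ :=
    mul_pos (mul_pos (mul_pos hPpos hcpos) hNpos) hinv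
  have hF0pos : 0 < c ^ 2 * N + c ^ 2 * N * (P * c ^ 2 * N ^ 2) := by
    have h1 := mul_pos (pow_pos hcpos 2) hNpos
    have h2 := mul_pos h1 (mul_pos (mul_pos hPpos (pow_pos hcpos 2)) (pow_pos hNpos 2))
    nlinarith
  have hF1pos : 0 < c + c ^ 2 * N * (P * c * N * (1 - m)⁻¹) := by
    have h2 := mul_pos (mul_pos (pow_pos hcpos 2) hNpos) hE1pos
    nlinarith
  refine ⟨2 * (((1 + P * c ^ 2 * N ^ 2) + (c ^ 2 * N + c ^ 2 * N * (P * c ^ 2 * N ^ 2))) ^ 2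
      + ((P * c * N * (1 - m)⁻¹) + (c + c ^ 2 * N * (P * c * N * (1 - m)⁻¹))) ^ 2), ?_, ?_⟩
  · have h1 := pow_pos (add_pos hE0pos hF0pos) 2
    have h2 := pow_pos (add_pos hE1pos hF1pos) 2
    linarith
  intro ξ v v' v'' hv hv' hODE t₀ ht₀ hzone
  set r : ℝ := ‖ξ‖ with hrdef
  have hr0 : 0 ≤ r := norm_nonneg ξ
  have h1t₀ : (0:ℝ) < 1 + t₀ := by linarith
  have hzone' : r * (1 + t₀) ≤ N := by rw [mul_comm]; exact hzone
  -- continuity of composed functions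
  have hmaxc : Continuous (fun s : ℝ => max s 0) := continuous_id.max continuous_const
  have hmax_nonneg : ∀ s : ℝ, 0 ≤ max s 0 := fun s => le_max_right s 0
  have hvmaxc : Continuous fun s : ℝ => v (max s 0) := by
    rw [continuous_iff_continuousAt]
    intro x
    have hcc : ContinuousAt (v ∘ fun s : ℝ => max s 0) x :=
      ContinuousAt.comp ((hv (max x 0) (hmax_nonneg x)).continuousAt) hmaxc.continuousAt
    exact hcc
  have hv'maxc : Continuous fun s : ℝ => v' (max s 0) := by
    rw [continuous_iff_continuousAt]
    intro x
    have hcc : ContinuousAt (v' ∘ fun s : ℝ => max s 0) x :=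
      ContinuousAt.comp ((hv' (max x 0) (hmax_nonneg x)).continuousAt) hmaxc.continuousAt
    exact hcc
  have hηmaxc : Continuous fun s : ℝ => η (max s 0) := by
    rw [continuous_iff_continuousAt]
    intro x
    have hcc : ContinuousAt (η ∘ fun s : ℝ => max s 0) x :=
      ContinuousAt.comp ((hηd (max x 0) (hmax_nonneg x)).continuousAt) hmaxc.continuousAt
    exact hcc
  have hbtilc : Continuous fun u : ℝ => σ₀ (η (max u 0)) / (1 + max u 0) := by
    apply Continuous.div (hσ₀cont.comp hηmaxc) (continuous_const.add hmaxc)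
    intro x
    have := hmax_nonneg x
    exact ne_of_gt (show (0:ℝ) < 1 + max x 0 by linarith)
  -- the function B
  set Bf : ℝ → ℝ := fun t => ∫ u in (0:ℝ)..t, σ₀ (η (max u 0)) / (1 + max u 0) with hBf
  have hBd : ∀ s : ℝ, HasDerivAt Bf (σ₀ (η (max s 0)) / (1 + max s 0)) s := by
    intro s
    rw [hBf]
    exact (hbtilc.integral_hasStrictDerivAt 0 s).hasDerivAt
  have hBc : Continuous Bf := Differentiable.continuous fun s => (hBd s).differentiableAt
  have hB0 : Bf 0 = 0 := by rw [hBf]; simp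
  have hBbound : ∀ s, 0 ≤ s → |Bf s - m * Real.log (1 + s)| ≤ 2 * M / η' 0 := by
    intro s hs
    rw [hBf]
    exact B_log_bound hσ₀cont hM hηd hηd' hη''cont hη'pos hη''pos hs
  -- exponential bounds
  have heB_le : ∀ s : ℝ, 0 ≤ s → Real.exp (Bf s) ≤ c * (1 + s) ^ m := by
    intro s hs
    have h1s : (0:ℝ) < 1 + s := by linarith
    have hb := abs_le.mp (hBbound s hs)
    calc Real.exp (Bf s) ≤ Real.exp (2 * M / η' 0 + Real.log (1 + s) * m) :=
          Real.exp_le_exp.mpr (by nlinarith [hb.2])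
      _ = c * (1 + s) ^ m := by
          rw [Real.exp_add, Real.rpow_def_of_pos h1s, hcdef]
  have heBinv_le : ∀ s : ℝ, 0 ≤ s → (Real.exp (Bf s))⁻¹ ≤ c * (1 + s) ^ (-m) := by
    intro s hs
    have h1s : (0:ℝ) < 1 + s := by linarith
    have hb := abs_le.mp (hBbound s hs)
    calc (Real.exp (Bf s))⁻¹ = Real.exp (-(Bf s)) := (Real.exp_neg _).symm
      _ ≤ Real.exp (2 * M / η' 0 + Real.log (1 + s) * (-m)) :=
          Real.exp_le_exp.mpr (by nlinarith [hb.1])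
      _ = c * (1 + s) ^ (-m) := by
          rw [Real.exp_add, Real.rpow_def_of_pos h1s, hcdef]
  -- the function E
  have heBc : Continuous fun u : ℝ => Real.exp (Bf u) := Real.continuous_exp.comp hBc
  set Ef : ℝ → ℝ := fun s => ∫ u in (0:ℝ)..s, Real.exp (Bf u) with hEf
  have hEnonneg : ∀ s, 0 ≤ s → 0 ≤ Ef s := by
    intro s hs
    rw [hEf]
    exact intervalIntegral.integral_nonneg hs fun u _ => (Real.exp_pos _).le
  have hE_le : ∀ s : ℝ, 0 ≤ s → Ef s ≤ c * (1 + s) ^ (m + 1) := by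
    intro s hs
    have h1s : (0:ℝ) < 1 + s := by linarith
    have step1 : Ef s ≤ ∫ u in (0:ℝ)..s, c * (1 + u) ^ m := by
      rw [hEf]
      apply intervalIntegral.integral_mono_on hs (heBc.intervalIntegrable 0 s)
      · apply Continuous.intervalIntegrable
        apply continuous_const.mul
        apply Continuous.rpow_const (continuous_const.add continuous_id)
        intro x; exact Or.inr hm0.le
      · intro u hu
        exact heB_le u hu.1
    have step2 : (∫ u in (0:ℝ)..s, c * (1 + u) ^ m) = c * (((1 + s) ^ (m + 1) - 1) / (m + 1)) := by
      rw [intervalIntegral.integral_const_mul, integral_one_add_rpow hs hm0.le]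
    have h1le : (1:ℝ) ≤ (1 + s) ^ (m + 1) := by
      have h := Real.rpow_le_rpow_of_exponent_le (by linarith : (1:ℝ) ≤ 1 + s)
        (by linarith : (0:ℝ) ≤ m + 1)
      rwa [Real.rpow_zero] at h
    have h3 : ((1 + s) ^ (m + 1) - 1) / (m + 1) ≤ (1 + s) ^ (m + 1) := by
      have := div_le_self (by linarith : (0:ℝ) ≤ (1 + s) ^ (m + 1) - 1) (by linarith : (1:ℝ) ≤ m + 1)
      linarith
    calc Ef s ≤ c * (((1 + s) ^ (m + 1) - 1) / (m + 1)) := step1.trans (le_of_eq step2)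
      _ ≤ c * ((1 + s) ^ (m + 1)) := mul_le_mul_of_nonneg_left h3 hcpos.le
  -- kappa
  set κ : ℝ := c ^ 2 * r ^ 2 * (1 + t₀) with hκdef
  have hκ0 : 0 ≤ κ := by rw [hκdef]; positivity
  have hzsq : (r * (1 + t₀)) ^ 2 ≤ N ^ 2 := pow_le_pow_left₀ (by positivity) hzone' 2
  have hκt₀ : κ * t₀ ≤ c ^ 2 * N ^ 2 := by
    rw [hκdef]
    nlinarith [mul_le_mul_of_nonneg_left hzsq (pow_pos hcpos 2).le,
      mul_nonneg (mul_nonneg (pow_pos hcpos 2).le (sq_nonneg r)) h1t₀.le,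
      mul_nonneg (mul_nonneg (pow_pos hcpos 2).le (sq_nonneg r)) ht₀]
  have hκr : κ ≤ c ^ 2 * N * r := by
    rw [hκdef]
    nlinarith [mul_le_mul_of_nonneg_left hzone' (mul_nonneg (sq_nonneg c) hr0)]
  -- kernel bound
  have hkernel : ∀ s ∈ Icc (0:ℝ) t₀, r ^ 2 * ((Real.exp (Bf s))⁻¹ * Ef s) ≤ κ := by
    intro s hs
    have h1s : (0:ℝ) < 1 + s := by linarith [hs.1]
    have e1 := heBinv_le s hs.1
    have e2 := hE_le s hs.1
    have hrp1 : (0:ℝ) ≤ c * (1 + s) ^ (-m) := by positivity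
    have hprod : (Real.exp (Bf s))⁻¹ * Ef s ≤ (c * (1 + s) ^ (-m)) * (c * (1 + s) ^ (m + 1)) :=
      mul_le_mul e1 e2 (hEnonneg s hs.1) hrp1
    have hrw : (c * (1 + s) ^ (-m)) * (c * (1 + s) ^ (m + 1)) = c ^ 2 * (1 + s) := by
      have h := (Real.rpow_add h1s (-m) (m + 1)).symm
      have h2 : -m + (m + 1) = 1 := by ring
      rw [h2, Real.rpow_one] at h
      calc (c * (1 + s) ^ (-m)) * (c * (1 + s) ^ (m + 1))
          = c ^ 2 * ((1 + s) ^ (-m) * (1 + s) ^ (m + 1)) := by ring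
        _ = c ^ 2 * (1 + s) := by rw [h]
    have h4 : r ^ 2 * ((Real.exp (Bf s))⁻¹ * Ef s) ≤ r ^ 2 * (c ^ 2 * (1 + s)) := by
      rw [← hrw]
      exact mul_le_mul_of_nonneg_left hprod (sq_nonneg r)
    have h5 : r ^ 2 * (c ^ 2 * (1 + s)) ≤ κ := by
      rw [hκdef]
      nlinarith [mul_le_mul_of_nonneg_left (show (1:ℝ) + s ≤ 1 + t₀ by linarith [hs.2])
        (mul_nonneg (sq_nonneg r) (sq_nonneg c))]
    linarith
  -- FTC for psi
  have hψ : ∀ s : ℝ, 0 ≤ s → Real.exp (Bf s) * v' s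
      = v' 0 + ∫ u in (0:ℝ)..s, (-(r ^ 2) * (Real.exp (Bf u) * v (max u 0))) := by
    intro s hs
    have hcontf : ContinuousOn (fun u => Real.exp (Bf u) * v' (max u 0)) (Icc 0 s) :=
      (heBc.mul hv'maxc).continuousOn
    have hint : IntervalIntegrable (fun u => -(r ^ 2) * (Real.exp (Bf u) * v (max u 0)))
        MeasureTheory.volume 0 s :=
      (continuous_const.mul (heBc.mul hvmaxc)).intervalIntegrable 0 s
    have hderiv : ∀ x ∈ Ioo (0:ℝ) s, HasDerivWithinAt (fun u => Real.exp (Bf u) * v' (max u 0))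
        (-(r ^ 2) * (Real.exp (Bf x) * v (max x 0))) (Ioi x) x := by
      intro x hx
      have hx0 : (0:ℝ) ≤ x := hx.1.le
      have hmax : max x 0 = x := max_eq_left hx0
      have h2 : HasDerivAt (fun u => Real.exp (Bf u) * v' u)
          (Real.exp (Bf x) * (σ₀ (η (max x 0)) / (1 + max x 0)) * v' x
            + Real.exp (Bf x) * v'' x) x :=
        ((hBd x).exp).mul (hv' x hx0)
      have hev : (fun u => Real.exp (Bf u) * v' (max u 0)) =ᶠ[nhds x]
          fun u => Real.exp (Bf u) * v' u := by
        filter_upwards [Ioi_mem_nhds hx.1] with u hu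
        rw [max_eq_left (le_of_lt hu)]
      have h3 := h2.congr_of_eventuallyEq hev
      have h4 : Real.exp (Bf x) * (σ₀ (η (max x 0)) / (1 + max x 0)) * v' x
          + Real.exp (Bf x) * v'' x
          = -(r ^ 2) * (Real.exp (Bf x) * v (max x 0)) := by
        rw [hmax]
        linear_combination (Real.exp (Bf x)) * (hODE x hx0)
      rw [h4] at h3
      exact h3.hasDerivWithinAt
    have h := intervalIntegral.integral_eq_sub_of_hasDeriv_right_of_le hs hcontf hderiv hint
    simp only [max_eq_left hs, max_self, hB0, Real.exp_zero, one_mul] at h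
    linarith
  -- FTC for v
  have hvFTC : ∀ s : ℝ, 0 ≤ s → v s = v 0 + ∫ u in (0:ℝ)..s, v' (max u 0) := by
    intro s hs
    have hderiv : ∀ x ∈ Ioo (0:ℝ) s, HasDerivWithinAt (fun u => v (max u 0))
        (v' (max x 0)) (Ioi x) x := by
      intro x hx
      have hmax : max x 0 = x := max_eq_left hx.1.le
      have hev : (fun u => v (max u 0)) =ᶠ[nhds x] v := by
        filter_upwards [Ioi_mem_nhds hx.1] with u hu
        rw [max_eq_left (le_of_lt hu)]
      have h3 := (hv x hx.1.le).congr_of_eventuallyEq hev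
      rw [hmax]
      exact h3.hasDerivWithinAt
    have h := intervalIntegral.integral_eq_sub_of_hasDeriv_right_of_le hs
      hvmaxc.continuousOn hderiv (hv'maxc.intervalIntegrable 0 s)
    simp only [max_eq_left hs, max_self] at h
    linarith
  -- the function W
  set Wf : ℝ → ℝ := fun s => ∫ u in (0:ℝ)..s, |v' (max u 0)| with hWf
  have hWd : ∀ s : ℝ, HasDerivAt Wf |v' (max s 0)| s := by
    intro s
    rw [hWf]
    exact ((hv'maxc.abs).integral_hasStrictDerivAt 0 s).hasDerivAt
  have hWmono : Monotone Wf := monotone_of_deriv_nonneg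
    (fun s => (hWd s).differentiableAt)
    (fun s => by rw [(hWd s).deriv]; exact abs_nonneg _)
  have hW0 : Wf 0 = 0 := by rw [hWf]; simp
  have hWnonneg : ∀ s, 0 ≤ s → 0 ≤ Wf s := fun s hs => hW0 ▸ hWmono hs
  have hvb : ∀ s : ℝ, 0 ≤ s → |v s| ≤ |v 0| + Wf s := by
    intro s hs
    rw [hvFTC s hs]
    have h1 := abs_add_le (v 0) (∫ u in (0:ℝ)..s, v' (max u 0))
    have h2 := intervalIntegral.abs_integral_le_integral_abs
      (μ := MeasureTheory.volume) (f := fun u => v' (max u 0)) hs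
    rw [hWf]
    simp only
    linarith
  -- psi bound
  have hψb : ∀ s : ℝ, 0 ≤ s → |Real.exp (Bf s) * v' s|
      ≤ |v' 0| + r ^ 2 * (|v 0| + Wf s) * Ef s := by
    intro s hs
    rw [hψ s hs]
    have habs := abs_add_le (v' 0) (∫ u in (0:ℝ)..s, (-(r ^ 2) * (Real.exp (Bf u) * v (max u 0))))
    have h2 : |∫ u in (0:ℝ)..s, (-(r ^ 2) * (Real.exp (Bf u) * v (max u 0)))|
        ≤ ∫ u in (0:ℝ)..s, (r ^ 2 * (|v 0| + Wf s)) * Real.exp (Bf u) := by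
      calc |∫ u in (0:ℝ)..s, (-(r ^ 2) * (Real.exp (Bf u) * v (max u 0)))|
          ≤ ∫ u in (0:ℝ)..s, |(-(r ^ 2) * (Real.exp (Bf u) * v (max u 0)))| :=
            intervalIntegral.abs_integral_le_integral_abs hs
        _ ≤ ∫ u in (0:ℝ)..s, (r ^ 2 * (|v 0| + Wf s)) * Real.exp (Bf u) := by
            apply intervalIntegral.integral_mono_on hs
            · exact ((continuous_const.mul (heBc.mul hvmaxc)).abs).intervalIntegrable 0 s
            · exact (continuous_const.mul heBc).intervalIntegrable 0 s
            · intro u hu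
              have hmaxu : max u 0 = u := max_eq_left hu.1
              have hvu : |v (max u 0)| ≤ |v 0| + Wf s := by
                rw [hmaxu]
                have e1 := hvb u hu.1
                have e2 := hWmono hu.2
                linarith
              have e : |(-(r ^ 2) * (Real.exp (Bf u) * v (max u 0)))|
                  = r ^ 2 * (Real.exp (Bf u) * |v (max u 0)|) := by
                rw [abs_mul, abs_neg, abs_mul, abs_of_pos (Real.exp_pos _),
                  abs_of_nonneg (sq_nonneg r)]
              rw [e]
              nlinarith [mul_le_mul_of_nonneg_left
                (mul_le_mul_of_nonneg_left hvu (Real.exp_pos (Bf u)).le) (sq_nonneg r)]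
    have h3 : (∫ u in (0:ℝ)..s, (r ^ 2 * (|v 0| + Wf s)) * Real.exp (Bf u))
        = r ^ 2 * (|v 0| + Wf s) * Ef s := by
      rw [intervalIntegral.integral_const_mul, hEf]
    rw [h3] at h2
    linarith
  -- derivative bound for W
  have hW'bound : ∀ s ∈ Icc (0:ℝ) t₀, |v' s|
      ≤ (c * |v' 0|) * (1 + s) ^ (-m) + κ * |v 0| + κ * Wf s := by
    intro s hs
    have hs0 := hs.1
    have hE := Real.exp_pos (Bf s)
    have heq : |v' s| = (Real.exp (Bf s))⁻¹ * |Real.exp (Bf s) * v' s| := by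
      rw [abs_mul, abs_of_pos hE, ← mul_assoc, inv_mul_cancel₀ (ne_of_gt hE), one_mul]
    rw [heq]
    have h1 := hψb s hs0
    have hinvpos : 0 < (Real.exp (Bf s))⁻¹ := inv_pos.mpr hE
    have h2 : (Real.exp (Bf s))⁻¹ * |Real.exp (Bf s) * v' s|
        ≤ (Real.exp (Bf s))⁻¹ * (|v' 0| + r ^ 2 * (|v 0| + Wf s) * Ef s) :=
      mul_le_mul_of_nonneg_left h1 hinvpos.le
    have h3 : (Real.exp (Bf s))⁻¹ * |v' 0| ≤ (c * (1 + s) ^ (-m)) * |v' 0| :=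
      mul_le_mul_of_nonneg_right (heBinv_le s hs0) (abs_nonneg _)
    have h4 : (Real.exp (Bf s))⁻¹ * (r ^ 2 * (|v 0| + Wf s) * Ef s)
        = (r ^ 2 * ((Real.exp (Bf s))⁻¹ * Ef s)) * (|v 0| + Wf s) := by ring
    have h5 : (r ^ 2 * ((Real.exp (Bf s))⁻¹ * Ef s)) * (|v 0| + Wf s) ≤ κ * (|v 0| + Wf s) := by
      apply mul_le_mul_of_nonneg_right (hkernel s hs)
      have e1 := hWnonneg s hs0
      have e2 := abs_nonneg (v 0)
      linarith
    linarith [h2, h3, h4, h5]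
  -- Gronwall
  have hWt : Wf t₀ ≤ Real.exp (κ * t₀)
      * ((c * |v' 0|) * (1 - m)⁻¹ * (1 + t₀) ^ (1 - m) + (κ * |v 0|) * t₀) := by
    apply gronwall_concrete hκ0 ht₀ hm0 hm1 (mul_nonneg hcpos.le (abs_nonneg _))
      (mul_nonneg hκ0 (abs_nonneg _)) hWd (fun s => abs_nonneg _) hW0
    intro s hs
    have hmax : max s 0 = s := max_eq_left hs.1
    rw [hmax]
    have := hW'bound s hs
    linarith
  have hexpP : Real.exp (κ * t₀) ≤ P := by
    rw [hPdef]
    exact Real.exp_le_exp.mpr hκt₀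
  have hFt₀nonneg : 0 ≤ (c * |v' 0|) * (1 - m)⁻¹ * (1 + t₀) ^ (1 - m) + (κ * |v 0|) * t₀ :=
    add_nonneg (mul_nonneg (mul_nonneg (mul_nonneg hcpos.le (abs_nonneg _)) hinv.le)
      (Real.rpow_nonneg h1t₀.le _)) (mul_nonneg (mul_nonneg hκ0 (abs_nonneg _)) ht₀)
  have hWt2 : Wf t₀ ≤ P * ((c * |v' 0|) * (1 - m)⁻¹ * (1 + t₀) ^ (1 - m) + (κ * |v 0|) * t₀) :=
    hWt.trans (mul_le_mul_of_nonneg_right hexpP hFt₀nonneg)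
  -- zone consequences
  have key1 : r * (1 + t₀) ^ (1 - m) ≤ N * (1 + t₀) ^ (-m) := by
    have e : (1 + t₀) ^ ((1:ℝ) - m) = (1 + t₀) * (1 + t₀) ^ (-m) := by
      rw [show (1:ℝ) - m = 1 + (-m) by ring, Real.rpow_add h1t₀, Real.rpow_one]
    rw [e, ← mul_assoc]
    exact mul_le_mul_of_nonneg_right hzone' (Real.rpow_nonneg h1t₀.le _)
  have h_rW : r * Wf t₀ ≤ (P * c * N * (1 - m)⁻¹) * ((1 + t₀) ^ (-m) * |v' 0|)
      + (P * c ^ 2 * N ^ 2) * (r * |v 0|) := by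
    have t0 : r * Wf t₀
        ≤ r * (P * ((c * |v' 0|) * (1 - m)⁻¹ * (1 + t₀) ^ (1 - m) + (κ * |v 0|) * t₀)) :=
      mul_le_mul_of_nonneg_left hWt2 hr0
    have e : r * (P * ((c * |v' 0|) * (1 - m)⁻¹ * (1 + t₀) ^ (1 - m) + (κ * |v 0|) * t₀))
        = (P * c * |v' 0| * (1 - m)⁻¹) * (r * (1 + t₀) ^ (1 - m))
          + P * (κ * t₀) * (r * |v 0|) := by ring
    have hco1 : (0:ℝ) ≤ P * c * |v' 0| * (1 - m)⁻¹ :=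
      mul_nonneg (mul_nonneg (mul_nonneg hPpos.le hcpos.le) (abs_nonneg _)) hinv.le
    have t1 : (P * c * |v' 0| * (1 - m)⁻¹) * (r * (1 + t₀) ^ (1 - m))
        ≤ (P * c * |v' 0| * (1 - m)⁻¹) * (N * (1 + t₀) ^ (-m)) :=
      mul_le_mul_of_nonneg_left key1 hco1
    have hx0 : (0:ℝ) ≤ r * |v 0| := mul_nonneg hr0 (abs_nonneg _)
    have t2 : P * (κ * t₀) * (r * |v 0|) ≤ P * (c ^ 2 * N ^ 2) * (r * |v 0|) := by
      have e1 := mul_le_mul_of_nonneg_right hκt₀ hx0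
      linarith [mul_le_mul_of_nonneg_left e1 hPpos.le]
    linarith [t0, t1, t2, e]
  -- final component bounds
  have h1 : r * |v t₀| ≤ (1 + P * c ^ 2 * N ^ 2) * (r * |v 0|)
      + (P * c * N * (1 - m)⁻¹) * ((1 + t₀) ^ (-m) * |v' 0|) := by
    have e0 := mul_le_mul_of_nonneg_left (hvb t₀ ht₀) hr0
    linarith [e0, h_rW]
  have h2 : |v' t₀| ≤ (c ^ 2 * N + c ^ 2 * N * (P * c ^ 2 * N ^ 2)) * (r * |v 0|)
      + (c + c ^ 2 * N * (P * c * N * (1 - m)⁻¹)) * ((1 + t₀) ^ (-m) * |v' 0|) := by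
    have ht := hW'bound t₀ ⟨ht₀, le_rfl⟩
    have e5 : κ * |v 0| ≤ (c ^ 2 * N) * (r * |v 0|) := by
      linarith [mul_le_mul_of_nonneg_right hκr (abs_nonneg (v 0))]
    have e6 : κ * Wf t₀ ≤ (c ^ 2 * N * r) * Wf t₀ :=
      mul_le_mul_of_nonneg_right hκr (hWnonneg t₀ ht₀)
    have e7 : (c ^ 2 * N) * (r * Wf t₀)
        ≤ (c ^ 2 * N) * ((P * c * N * (1 - m)⁻¹) * ((1 + t₀) ^ (-m) * |v' 0|)
          + (P * c ^ 2 * N ^ 2) * (r * |v 0|)) :=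
      mul_le_mul_of_nonneg_left h_rW (mul_nonneg (sq_nonneg c) hNpos.le)
    linarith [ht, e5, e6, e7]
  -- assemble
  have hX0 : (0:ℝ) ≤ r * |v 0| := mul_nonneg hr0 (abs_nonneg _)
  have hY0 : (0:ℝ) ≤ (1 + t₀) ^ (-m) * |v' 0| :=
    mul_nonneg (Real.rpow_nonneg h1t₀.le _) (abs_nonneg _)
  have hfinal := assemble_sq hX0 hY0 hE0pos.le hE1pos.le hF0pos.le hF1pos.le
    (mul_nonneg hr0 (abs_nonneg _)) (abs_nonneg _) h1 h2
  have eg1 : r ^ 2 * v t₀ ^ 2 = (r * |v t₀|) ^ 2 := by rw [mul_pow, sq_abs]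
  have eg2 : v' t₀ ^ 2 = |v' t₀| ^ 2 := (sq_abs _).symm
  have eg3 : r ^ 2 * v 0 ^ 2 = (r * |v 0|) ^ 2 := by rw [mul_pow, sq_abs]
  have eg4 : (1 + t₀) ^ (-(2 * m)) * v' 0 ^ 2 = ((1 + t₀) ^ (-m) * |v' 0|) ^ 2 := by
    rw [mul_pow, sq_abs]
    congr 1
    rw [show -(2 * m) = (-m) + (-m) by ring, Real.rpow_add h1t₀]
    ring
  rw [eg1, eg2, eg3, eg4]
  exact hfinal
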